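/- More generally, let α be a positive rational and let {a_1, ..., a_r} be distinct positive integers, all odd, with 1/a_1 + ... + 1/a_r = α and a_1 + ... + a_r = n. Write α = p/q in lowest terms; then q is odd and n·q ≡ p (mod 8). -/

import Mathlib

lemma odd_sq_zmod8 (a : ℕ) (ha : Odd a) : (a : ZMod 8) * (a : ZMod 8) = 1 := by
  obtain ⟨k, rfl⟩ := ha
  obtain ⟨m, hm⟩ := Nat.even_mul_succ_self k
  have h : (2*k+1)*(2*k+1) = 8 * m + 1 := by
    have : k * (k+1) = m + m := hm
    nlinarith [this]
  rw [← Nat.cast_mul, h]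
  push_cast
  have h8 : (8 : ZMod 8) = 0 := by decide
  rw [h8]; ring

theorem odd_alpha_partition_mod_eight (α : ℚ) (hα : 0 < α)
    (A : Finset ℕ) (n : ℕ)
    (hpos : ∀ a ∈ A, 0 < a) (hodd : ∀ a ∈ A, Odd a)
    (hrecip : ∑ a ∈ A, (1 : ℚ) / a = α)
    (hsum : ∑ a ∈ A, a = n) :
    Odd α.den ∧ (n * α.den : ℤ) ≡ α.num [ZMOD 8] := by
  set L : ℕ := ∏ a ∈ A, a with hL
  have hLodd : Odd L := Finset.prod_induction _ Odd (fun a b => Odd.mul) odd_one hodd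
  have hLpos : 0 < L := Finset.prod_pos hpos
  set S : ℕ := ∑ a ∈ A, L / a with hS
  have hdvd : ∀ a ∈ A, a ∣ L := fun a ha => Finset.dvd_prod_of_mem _ ha
  have hSQ : (S : ℚ) = (L : ℚ) * α := by
    rw [hS, ← hrecip, Nat.cast_sum, Finset.mul_sum]
    refine Finset.sum_congr rfl fun a ha => ?_
    have hane : (a : ℚ) ≠ 0 := Nat.cast_ne_zero.2 (hpos a ha).ne'
    rw [Nat.cast_div (hdvd a ha) hane]
    field_simp
  have hLne : ((L : ℤ) : ℚ) ≠ 0 := by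
    push_cast; exact Nat.cast_ne_zero.2 hLpos.ne'
  have hαeq : α = Rat.divInt (S : ℤ) (L : ℤ) := by
    rw [Rat.divInt_eq_div, eq_div_iff hLne]
    push_cast
    rw [hSQ]; ring
  have hdenL : (α.den : ℤ) ∣ (L : ℤ) := by
    rw [hαeq]; exact Rat.den_dvd _ _
  have hdenL' : α.den ∣ L := Int.ofNat_dvd.mp hdenL
  have hdenodd : Odd α.den := by
    by_contra h
    rw [Nat.not_odd_iff_even] at h
    have : Even L := (even_iff_two_dvd).mpr (dvd_trans h.two_dvd hdenL')
    exact (Nat.not_even_iff_odd.mpr hLodd) this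
  refine ⟨hdenodd, ?_⟩
  have hden : (α.den : ℚ) ≠ 0 := by exact_mod_cast α.den_ne_zero
  have h1 : α * (α.den : ℚ) = (α.num : ℚ) := by
    rw [mul_comm, Rat.den_mul_eq_num]
  have hcross : (S : ℤ) * α.den = (L : ℤ) * α.num := by
    have : (S : ℚ) * α.den = (L : ℚ) * α.num := by
      rw [hSQ, mul_assoc, h1]
    exact_mod_cast this
  have key : (((S : ℤ) * α.den : ℤ) : ZMod 8) = (((L : ℤ) * α.num : ℤ) : ZMod 8) := by
    rw [hcross]
  have hSz : (S : ZMod 8) = (L : ZMod 8) * (n : ZMod 8) := by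
    rw [hS, ← hsum, Nat.cast_sum, Nat.cast_sum, Finset.mul_sum]
    refine Finset.sum_congr rfl fun a ha => ?_
    have h1' : (L / a : ℕ) * a = L := Nat.div_mul_cancel (hdvd a ha)
    have h2 : ((L / a : ℕ) : ZMod 8) * (a : ZMod 8) = (L : ZMod 8) := by
      rw [← Nat.cast_mul, h1']
    calc ((L / a : ℕ) : ZMod 8) = ((L / a : ℕ) : ZMod 8) * ((a : ZMod 8) * a) := by
          rw [odd_sq_zmod8 a (hodd a ha), mul_one]
      _ = (L : ZMod 8) * a := by rw [← mul_assoc, h2]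
  have hLunit : IsUnit (L : ZMod 8) := IsUnit.of_mul_eq_one _ (odd_sq_zmod8 L hLodd)
  have final : ((n * α.den : ℤ) : ZMod 8) = ((α.num : ℤ) : ZMod 8) := by
    apply hLunit.mul_left_cancel
    push_cast at key ⊢
    rw [← key, hSz]; ring
  exact (ZMod.intCast_eq_intCast_iff _ _ _).mp final
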